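/- Let φ(t) = t^p log^γ(e+t) for t ≥ 0, with 1 < p < ∞ and γ ∈ ℝ. Then the conjugate function φ*(s) = sup_{t≥0}(st − φ(t)) satisfies φ*(s) ≍ s^{p'} log^{γ/(1−p)}(e+s) for s ≥ 0, where p' = p/(p−1) and ≍ means two-sided comparability with constants depending only on p and γ. -/

import Mathlib

open Set Real Filter


noncomputable def lg (x : ℝ) : ℝ := Real.log (Real.exp 1 + x)

lemma lg_one_le {x : ℝ} (hx : 0 ≤ x) : 1 ≤ lg x := by
  have h : Real.exp 1 ≤ Real.exp 1 + x := by linarith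
  calc (1:ℝ) = Real.log (Real.exp 1) := (Real.log_exp 1).symm
    _ ≤ lg x := Real.log_le_log (Real.exp_pos 1) h

lemma lg_pos {x : ℝ} (hx : 0 ≤ x) : 0 < lg x := lt_of_lt_of_le one_pos (lg_one_le hx)

lemma lg_mono {x y : ℝ} (hx : 0 ≤ x) (h : x ≤ y) : lg x ≤ lg y :=
  Real.log_le_log (by positivity) (by simpa [lg] using h)

-- shrink: κ * lg x ≤ lg (κ * x)
lemma lg_shrink {κ x : ℝ} (h0 : 0 < κ) (h1 : κ ≤ 1) (hx : 0 ≤ x) :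
    κ * lg x ≤ lg (κ * x) := by
  have he : (0:ℝ) < Real.exp 1 := Real.exp_pos 1
  have h2 : (Real.exp 1 + x) ^ κ * (Real.exp 1) ^ (1 - κ) ≤
      κ * (Real.exp 1 + x) + (1 - κ) * Real.exp 1 :=
    Real.geom_mean_le_arith_mean2_weighted h0.le (by linarith) (by positivity) he.le (by ring)
  have h3 : (1:ℝ) ≤ (Real.exp 1) ^ (1 - κ) := by
    apply Real.one_le_rpow (by nlinarith [Real.add_one_le_exp (1:ℝ)]) (by linarith)
  have h4 : (Real.exp 1 + x) ^ κ ≤ Real.exp 1 + κ * x := by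
    have h5 : (Real.exp 1 + x) ^ κ ≤ (Real.exp 1 + x) ^ κ * (Real.exp 1) ^ (1 - κ) := by
      nlinarith [Real.rpow_nonneg (show (0:ℝ) ≤ Real.exp 1 + x by positivity) κ]
    nlinarith
  have h6 : Real.log ((Real.exp 1 + x) ^ κ) ≤ lg (κ * x) :=
    Real.log_le_log (by positivity) h4
  rwa [Real.log_rpow (by positivity)] at h6




-- lg x ≤ (1 + log κ⁻¹) * lg (κ x)
lemma lg_scale_lower {κ x : ℝ} (h0 : 0 < κ) (h1 : κ ≤ 1) (hx : 0 ≤ x) :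
    lg x ≤ (1 + Real.log κ⁻¹) * lg (κ * x) := by
  have he : (0:ℝ) < Real.exp 1 := Real.exp_pos 1
  have h2 : κ * (Real.exp 1 + x) ≤ Real.exp 1 + κ * x := by nlinarith
  have h3 : Real.log κ + lg x ≤ lg (κ * x) := by
    have := Real.log_le_log (by positivity) h2
    rwa [Real.log_mul h0.ne' (by positivity)] at this
  have hC : 0 ≤ Real.log κ⁻¹ := Real.log_nonneg (by
    rw [le_inv_comm₀] <;> simp [h0, h1]
    )
  have hlk : Real.log κ⁻¹ = - Real.log κ := Real.log_inv κ
  have hA : 1 ≤ lg (κ * x) := lg_one_le (by positivity)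
  nlinarith [mul_le_mul_of_nonneg_left hA hC]

-- (a/(1+a*log(2e))) * lg x ≤ lg (x^a)
lemma lg_rpow_lower {a x : ℝ} (ha : 0 < a) (hx : 0 ≤ x) :
    (a / (1 + a * Real.log (2 * Real.exp 1))) * lg x ≤ lg (x ^ a) := by
  have he : (0:ℝ) < Real.exp 1 := Real.exp_pos 1
  have he1 : (1:ℝ) ≤ Real.exp 1 := by nlinarith [Real.add_one_le_exp (1:ℝ)]
  -- e + x ≤ 2e * max 1 x
  have key : (Real.exp 1 + x) ^ a ≤ (2 * Real.exp 1) ^ a * (Real.exp 1 + x ^ a) := by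
    have hmax : Real.exp 1 + x ≤ 2 * Real.exp 1 * max 1 x := by
      rcases le_total x 1 with h | h
      · have : max 1 x = 1 := max_eq_left h
        rw [this]; nlinarith
      · have : max 1 x = x := max_eq_right h
        rw [this]; nlinarith
    have h1 : (Real.exp 1 + x) ^ a ≤ (2 * Real.exp 1 * max 1 x) ^ a :=
      Real.rpow_le_rpow (by positivity) hmax ha.le
    have h2 : (2 * Real.exp 1 * max 1 x) ^ a = (2 * Real.exp 1) ^ a * (max 1 x) ^ a :=
      Real.mul_rpow (by positivity) (by positivity)
    have h3 : (max 1 x) ^ a ≤ Real.exp 1 + x ^ a := by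
      rcases le_total x 1 with h | h
      · have : max 1 x = 1 := max_eq_left h
        rw [this, Real.one_rpow]
        have := Real.rpow_nonneg hx a; nlinarith
      · have : max 1 x = x := max_eq_right h
        rw [this]; nlinarith [Real.rpow_nonneg hx a]
    calc (Real.exp 1 + x) ^ a ≤ (2 * Real.exp 1) ^ a * (max 1 x) ^ a := by rw [← h2]; exact h1
      _ ≤ (2 * Real.exp 1) ^ a * (Real.exp 1 + x ^ a) := by
          apply mul_le_mul_of_nonneg_left h3 (by positivity)
  have h4 : a * lg x ≤ a * Real.log (2 * Real.exp 1) + lg (x ^ a) := by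
    have := Real.log_le_log (by positivity) key
    rwa [Real.log_rpow (by positivity), Real.log_mul (by positivity) (by positivity),
      Real.log_rpow (by positivity)] at this
  have hC : 0 ≤ a * Real.log (2 * Real.exp 1) := by
    have : (1:ℝ) ≤ 2 * Real.exp 1 := by nlinarith
    have := Real.log_nonneg this
    positivity
  have hA : 1 ≤ lg (x ^ a) := lg_one_le (Real.rpow_nonneg hx a)
  rw [div_mul_eq_mul_div, div_le_iff₀ (by positivity)]
  nlinarith [mul_le_mul_of_nonneg_left hA hC]

-- upper bound: t ≤ K (e+x)^q ⇒ lg t ≤ (log(2K) + q) lg x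
lemma lg_poly_upper {K q t x : ℝ} (hK : 1 ≤ K) (hq : 1 ≤ q) (ht : 0 ≤ t) (hx : 0 ≤ x)
    (h : t ≤ K * (Real.exp 1 + x) ^ q) : lg t ≤ (Real.log (2 * K) + q) * lg x := by
  have he : (0:ℝ) < Real.exp 1 := Real.exp_pos 1
  have hb : (1:ℝ) ≤ Real.exp 1 + x := by nlinarith [Real.add_one_le_exp (1:ℝ)]
  have hexp : Real.exp 1 ≤ (Real.exp 1 + x) ^ q := by
    calc Real.exp 1 = (Real.exp 1 + x) ^ (1:ℝ) * (Real.exp 1 / (Real.exp 1 + x)) := by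
          rw [Real.rpow_one]; field_simp
      _ ≤ (Real.exp 1 + x) ^ q * 1 := by
          apply mul_le_mul (Real.rpow_le_rpow_of_exponent_le hb hq)
            (by rw [div_le_one (by positivity)]; linarith) (by positivity) (by positivity)
      _ = (Real.exp 1 + x) ^ q := mul_one _
  have h2 : Real.exp 1 + t ≤ 2 * K * (Real.exp 1 + x) ^ q := by
    have : Real.exp 1 ≤ K * (Real.exp 1 + x) ^ q := by
      calc Real.exp 1 ≤ (Real.exp 1 + x) ^ q := hexp
        _ ≤ K * (Real.exp 1 + x) ^ q := by nlinarith [Real.rpow_nonneg (show (0:ℝ) ≤ Real.exp 1 + x by positivity) q]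
    linarith
  have h3 : lg t ≤ Real.log (2 * K) + q * Real.log (Real.exp 1 + x) := by
    have := Real.log_le_log (by positivity) h2
    rwa [Real.log_mul (by positivity) (by positivity), Real.log_rpow (by positivity)] at this
  have hL : 1 ≤ lg x := lg_one_le hx
  have hlogK : 0 ≤ Real.log (2 * K) := Real.log_nonneg (by linarith)
  have h5 : Real.log (2*K) * 1 ≤ Real.log (2*K) * lg x := by nlinarith
  have h6 : lg t ≤ Real.log (2 * K) + q * lg x := h3
  nlinarith

-- ratio lemma
lemma ratio_rpow {x y D : ℝ} (hx : 1 ≤ x) (hy : 1 ≤ y) (hD : 1 ≤ D)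
    (h1 : x ≤ D * y) (h2 : y ≤ D * x) (γ : ℝ) : x ^ γ ≤ D ^ |γ| * y ^ γ := by
  have hx0 : (0:ℝ) < x := by linarith
  have hy0 : (0:ℝ) < y := by linarith
  have hD0 : (0:ℝ) < D := by linarith
  rcases le_or_gt 0 γ with hγ | hγ
  · rw [abs_of_nonneg hγ]
    calc x ^ γ ≤ (D * y) ^ γ := Real.rpow_le_rpow hx0.le h1 hγ
      _ = D ^ γ * y ^ γ := Real.mul_rpow hD0.le hy0.le
  · rw [abs_of_neg hγ]
    have key : y ^ (-γ) ≤ (D * x) ^ (-γ) := Real.rpow_le_rpow hy0.le h2 (by linarith)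
    rw [Real.mul_rpow hD0.le hx0.le] at key
    have hxg : x ^ γ = (x ^ (-γ))⁻¹ := by
      rw [← Real.rpow_neg hx0.le]; ring_nf
    have hyg : y ^ γ = (y ^ (-γ))⁻¹ := by
      rw [← Real.rpow_neg hy0.le]; ring_nf
    rw [hxg, hyg]
    have hxp : (0:ℝ) < x ^ (-γ) := Real.rpow_pos_of_pos hx0 _
    have hyp : (0:ℝ) < y ^ (-γ) := Real.rpow_pos_of_pos hy0 _
    have hDp : (0:ℝ) < D ^ (-γ) := Real.rpow_pos_of_pos hD0 _
    have step : (x ^ (-γ))⁻¹ ≤ D ^ (-γ) / y ^ (-γ) := by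
      rw [le_div_iff₀ hyp, inv_mul_eq_div, div_le_iff₀ hxp]
      linarith [key]
    rwa [div_eq_mul_inv] at step




lemma comp_upper (a b : ℝ) (ha : 0 < a) :
    ∃ C : ℝ, 1 ≤ C ∧ ∀ s, 0 ≤ s → lg (s ^ a * lg s ^ b) ≤ C * lg s := by
  set q := max (a + max b 0) 1 with hq
  refine ⟨Real.log 2 + q, by
    have h1 := Real.log_nonneg (by norm_num : (1:ℝ) ≤ 2)
    have h2 : (1:ℝ) ≤ q := le_max_right _ _
    linarith, fun s hs => ?_⟩
  have hls := lg_one_le hs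
  have hes : (0:ℝ) < Real.exp 1 + s := by positivity
  have h1 : s ^ a ≤ (Real.exp 1 + s) ^ a :=
    Real.rpow_le_rpow hs (by nlinarith [Real.exp_pos 1]) ha.le
  have h2 : lg s ^ b ≤ (Real.exp 1 + s) ^ max b 0 := by
    rcases le_or_gt b 0 with hb | hb
    · have : max b 0 = 0 := max_eq_right hb
      rw [this, Real.rpow_zero]
      exact Real.rpow_le_one_of_one_le_of_nonpos hls hb
    · have hmb : max b 0 = b := max_eq_left hb.le
      rw [hmb]
      exact Real.rpow_le_rpow (by linarith) (Real.log_le_self (by positivity)) hb.le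
  have h3 : s ^ a * lg s ^ b ≤ (Real.exp 1 + s) ^ (a + max b 0) := by
    rw [Real.rpow_add hes]
    exact mul_le_mul h1 h2 (Real.rpow_nonneg (le_of_lt (lg_pos hs)) b) (by positivity)
  have h4 : s ^ a * lg s ^ b ≤ 1 * (Real.exp 1 + s) ^ q := by
    rw [one_mul]
    calc s ^ a * lg s ^ b ≤ (Real.exp 1 + s) ^ (a + max b 0) := h3
      _ ≤ (Real.exp 1 + s) ^ q := Real.rpow_le_rpow_of_exponent_le
          (by nlinarith [Real.add_one_le_exp (1:ℝ)]) (le_max_left _ _)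
  have h5 := lg_poly_upper le_rfl (le_max_right _ _) (by positivity) hs h4
  norm_num at h5
  exact h5

lemma comp_lower (a b : ℝ) (ha : 0 < a) :
    ∃ c : ℝ, 0 < c ∧ c ≤ 1 ∧ ∀ s, 0 ≤ s → c * lg s ≤ lg (s ^ a * lg s ^ b) := by
  have he : (0:ℝ) < Real.exp 1 := Real.exp_pos 1
  have he1 : (1:ℝ) ≤ Real.exp 1 := by nlinarith [Real.add_one_le_exp (1:ℝ)]
  have hlog2e : (1:ℝ) ≤ Real.log (2 * Real.exp 1) := by
    calc (1:ℝ) = Real.log (Real.exp 1) := (Real.log_exp 1).symm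
      _ ≤ Real.log (2 * Real.exp 1) := Real.log_le_log he (by linarith)
  set ca : ℝ := a / (1 + a * Real.log (2 * Real.exp 1)) with hca
  have hca0 : 0 < ca := by rw [hca]; positivity
  have hca1 : ca ≤ 1 := by
    rw [hca, div_le_one (by positivity)]; nlinarith
  rcases le_or_gt 0 b with hb | hb
  · -- b ≥ 0 : T₁ ≥ s^a
    refine ⟨ca, hca0, hca1, fun s hs => ?_⟩
    have hls := lg_one_le hs
    have h1 : (1:ℝ) ≤ lg s ^ b := Real.one_le_rpow hls hb
    have h2 : s ^ a ≤ s ^ a * lg s ^ b := by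
      nlinarith [Real.rpow_nonneg hs a]
    calc ca * lg s ≤ lg (s ^ a) := lg_rpow_lower ha hs
      _ ≤ lg (s ^ a * lg s ^ b) := lg_mono (Real.rpow_nonneg hs a) h2
  · -- b < 0
    set δ : ℝ := a / (2 * (-b)) with hδ
    have hδ0 : 0 < δ := by rw [hδ]; apply div_pos ha; linarith
    set κ₀ : ℝ := min ((2 * Real.exp 1) ^ (-a) * δ ^ (-b)) 1 with hκ₀
    have hκ₀0 : 0 < κ₀ := by
      apply lt_min _ one_pos
      exact mul_pos (Real.rpow_pos_of_pos (by positivity) _) (Real.rpow_pos_of_pos hδ0 _)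
    have hκ₀1 : κ₀ ≤ 1 := min_le_right _ _
    set ca2 : ℝ := (a/2) / (1 + (a/2) * Real.log (2 * Real.exp 1)) with hca2
    have hca20 : 0 < ca2 := by rw [hca2]; positivity
    set c : ℝ := min (κ₀ * ca2) (1 / (1 + Real.log 2)) with hc
    have hlog2 : (0:ℝ) < Real.log 2 := Real.log_pos (by norm_num)
    have hc0 : 0 < c := by
      apply lt_min (by positivity) (by positivity)
    have hc1 : c ≤ 1 := by
      apply le_trans (min_le_right _ _)
      rw [div_le_one (by positivity)]; linarith
    refine ⟨c, hc0, hc1, fun s hs => ?_⟩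
    have hls := lg_one_le hs
    have hT1 : (0:ℝ) ≤ s ^ a * lg s ^ b := by
      have := Real.rpow_nonneg hs a
      have := Real.rpow_nonneg (le_of_lt (lg_pos hs)) b
      positivity
    rcases le_total s 1 with hs1 | hs1
    · -- small s : lg s ≤ log(2e) = 1 + log 2, lg T₁ ≥ 1
      have h1 : lg s ≤ 1 + Real.log 2 := by
        have : lg s ≤ Real.log (Real.exp 1 + 1) := lg_mono hs hs1
        calc lg s ≤ Real.log (Real.exp 1 + 1) := this
          _ ≤ Real.log (2 * Real.exp 1) := Real.log_le_log (by positivity) (by nlinarith)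
          _ = Real.log 2 + Real.log (Real.exp 1) := Real.log_mul (by norm_num) he.ne'
          _ = 1 + Real.log 2 := by rw [Real.log_exp]; ring
      have h2 : (1:ℝ) ≤ lg (s ^ a * lg s ^ b) := lg_one_le hT1
      calc c * lg s ≤ (1/(1 + Real.log 2)) * lg s := by
            apply mul_le_mul_of_nonneg_right (min_le_right _ _) (by linarith)
        _ ≤ 1 := by rw [div_mul_eq_mul_div, div_le_one (by positivity)]; linarith
        _ ≤ lg (s ^ a * lg s ^ b) := h2
    · -- s ≥ 1
      -- lg s ^ b ≥ δ^(-b) * (e+s)^(-a/2)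
      have hlgpoly : lg s ≤ (Real.exp 1 + s) ^ δ / δ :=
        Real.log_le_rpow_div (by positivity) hδ0
      have hstep : lg s ^ (-b) ≤ ((Real.exp 1 + s) ^ δ / δ) ^ (-b) :=
        Real.rpow_le_rpow (by linarith) hlgpoly (by linarith)
      have hes : (0:ℝ) < Real.exp 1 + s := by positivity
      have hrw : ((Real.exp 1 + s) ^ δ / δ) ^ (-b) = (Real.exp 1 + s) ^ (δ * (-b)) / δ ^ (-b) := by
        rw [Real.div_rpow (by positivity) hδ0.le, ← Real.rpow_mul hes.le]
      have hbne : -b ≠ 0 := by linarith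
      have hbne' : b ≠ 0 := by linarith
      have hδb : δ * (-b) = a / 2 := by
        rw [hδ]; field_simp
      rw [hrw, hδb] at hstep
      have hp1 : (0:ℝ) < lg s ^ (-b) := Real.rpow_pos_of_pos (lg_pos hs) _
      have hp2 : (0:ℝ) < (Real.exp 1 + s) ^ (a/2) := Real.rpow_pos_of_pos hes _
      have hp3 : (0:ℝ) < δ ^ (-b) := Real.rpow_pos_of_pos hδ0 _
      have hlow : δ ^ (-b) / (Real.exp 1 + s) ^ (a/2) ≤ lg s ^ b := by
        have h1 : lg s ^ b = (lg s ^ (-b))⁻¹ := by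
          rw [← Real.rpow_neg (le_of_lt (lg_pos hs)), neg_neg]
        rw [h1, div_le_iff₀ hp2, inv_mul_eq_div, le_div_iff₀ hp1]
        calc δ ^ (-b) * lg s ^ (-b) ≤ δ ^ (-b) * ((Real.exp 1 + s) ^ (a/2) / δ ^ (-b)) :=
              mul_le_mul_of_nonneg_left hstep hp3.le
          _ = (Real.exp 1 + s) ^ (a/2) := by field_simp
      -- s^a ≥ (e+s)^a * (2e)^(-a)
      have hsa : (Real.exp 1 + s) ^ a * (2 * Real.exp 1) ^ (-a) ≤ s ^ a := by
        have h2 : (Real.exp 1 + s) / (2 * Real.exp 1) ≤ s := by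
          rw [div_le_iff₀ (by positivity)]; nlinarith
        have h3 : ((Real.exp 1 + s) / (2 * Real.exp 1)) ^ a ≤ s ^ a :=
          Real.rpow_le_rpow (by positivity) h2 ha.le
        rwa [Real.div_rpow hes.le (by positivity), div_eq_mul_inv,
          ← Real.rpow_neg (by positivity : (0:ℝ) ≤ 2 * Real.exp 1)] at h3
      -- T₁ ≥ κ₀ (e+s)^(a/2)
      have hT1low : κ₀ * (Real.exp 1 + s) ^ (a/2) ≤ s ^ a * lg s ^ b := by
        have h4 : s ^ a * (δ ^ (-b) / (Real.exp 1 + s) ^ (a/2)) ≤ s ^ a * lg s ^ b :=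
          mul_le_mul_of_nonneg_left hlow (Real.rpow_nonneg hs a)
        have h5 : (Real.exp 1 + s) ^ a * (2 * Real.exp 1) ^ (-a) * (δ ^ (-b) / (Real.exp 1 + s) ^ (a/2))
            ≤ s ^ a * (δ ^ (-b) / (Real.exp 1 + s) ^ (a/2)) :=
          mul_le_mul_of_nonneg_right hsa (by positivity)
        have h6 : (Real.exp 1 + s) ^ a * (2 * Real.exp 1) ^ (-a) * (δ ^ (-b) / (Real.exp 1 + s) ^ (a/2))
            = ((2 * Real.exp 1) ^ (-a) * δ ^ (-b)) * ((Real.exp 1 + s) ^ a / (Real.exp 1 + s) ^ (a/2)) := by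
          ring
        have h7 : (Real.exp 1 + s) ^ a / (Real.exp 1 + s) ^ (a/2) = (Real.exp 1 + s) ^ (a/2) := by
          rw [← Real.rpow_sub hes]; ring_nf
        have h8 : κ₀ * (Real.exp 1 + s) ^ (a/2) ≤
            ((2 * Real.exp 1) ^ (-a) * δ ^ (-b)) * (Real.exp 1 + s) ^ (a/2) :=
          mul_le_mul_of_nonneg_right (min_le_left _ _) hp2.le
        calc κ₀ * (Real.exp 1 + s) ^ (a/2)
            ≤ ((2 * Real.exp 1) ^ (-a) * δ ^ (-b)) * (Real.exp 1 + s) ^ (a/2) := h8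
          _ = (Real.exp 1 + s) ^ a * (2 * Real.exp 1) ^ (-a) * (δ ^ (-b) / (Real.exp 1 + s) ^ (a/2)) := by
              rw [h6, h7]
          _ ≤ s ^ a * (δ ^ (-b) / (Real.exp 1 + s) ^ (a/2)) := h5
          _ ≤ s ^ a * lg s ^ b := h4
      -- conclude
      have hfin : κ₀ * ca2 * lg s ≤ lg (s ^ a * lg s ^ b) := by
        calc κ₀ * ca2 * lg s ≤ κ₀ * (ca2 * lg (Real.exp 1 + s)) := by
              have : lg s ≤ lg (Real.exp 1 + s) := lg_mono hs (by linarith)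
              have hca2' : 0 ≤ ca2 := hca20.le
              nlinarith [lg_pos hs, mul_le_mul_of_nonneg_left this hca2']
          _ ≤ κ₀ * lg ((Real.exp 1 + s) ^ (a/2)) := by
              apply mul_le_mul_of_nonneg_left (lg_rpow_lower (by positivity) hes.le) hκ₀0.le
          _ ≤ lg (κ₀ * (Real.exp 1 + s) ^ (a/2)) := lg_shrink hκ₀0 hκ₀1 hp2.le
          _ ≤ lg (s ^ a * lg s ^ b) := lg_mono (by positivity) hT1low
      calc c * lg s ≤ κ₀ * ca2 * lg s := by
            apply mul_le_mul_of_nonneg_right (min_le_left _ _) (by linarith)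
        _ ≤ lg (s ^ a * lg s ^ b) := hfin




lemma caseC_core {p q s t : ℝ} (hp : 1 < p) (hq1 : 1 ≤ q) (hq2 : 2/(p-1) ≤ q)
    (hs : 0 ≤ s) (hts : (Real.exp 1 + s) ^ q ≤ t) :
    s ≤ t ^ ((p-1)/2) ∧ 1 ≤ t ∧ Real.exp q ≤ t := by
  have hp1 : (0:ℝ) < p - 1 := by linarith
  have hq0 : (0:ℝ) < q := by linarith
  have he : (0:ℝ) < Real.exp 1 := Real.exp_pos 1
  have hes : (0:ℝ) < Real.exp 1 + s := by positivity
  have hexpq : Real.exp q ≤ t := by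
    calc Real.exp q = (Real.exp 1) ^ q := (Real.exp_one_rpow q).symm
      _ ≤ (Real.exp 1 + s) ^ q := Real.rpow_le_rpow he.le (by linarith) hq0.le
      _ ≤ t := hts
  have ht1 : (1:ℝ) ≤ t := by
    have := Real.add_one_le_exp q
    linarith
  have ht0 : (0:ℝ) < t := by linarith
  have hseq : s ≤ t ^ (1/q) := by
    have h1 : ((Real.exp 1 + s) ^ q) ^ (1/q) ≤ t ^ (1/q) :=
      Real.rpow_le_rpow (by positivity) hts (by positivity)
    rw [← Real.rpow_mul hes.le, mul_one_div, div_self hq0.ne', Real.rpow_one] at h1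
    nlinarith [Real.add_one_le_exp (1:ℝ)]
  have hle : 1/q ≤ (p-1)/2 := by
    rw [div_le_div_iff₀ hq0 (by norm_num)]
    rw [div_le_iff₀ hp1] at hq2
    linarith
  exact ⟨le_trans hseq (Real.rpow_le_rpow_of_exponent_le ht1 hle), ht1, hexpq⟩

lemma caseC (p γ : ℝ) (hp : 1 < p) :
    ∃ q : ℝ, 1 ≤ q ∧ ∀ s t : ℝ, 0 ≤ s → (Real.exp 1 + s) ^ q ≤ t →
      s ≤ t ^ (p-1) * lg t ^ γ := by
  have hp1 : (0:ℝ) < p - 1 := by linarith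
  have he : (0:ℝ) < Real.exp 1 := Real.exp_pos 1
  have he1 : (1:ℝ) ≤ Real.exp 1 := by nlinarith [Real.add_one_le_exp (1:ℝ)]
  rcases le_or_gt 0 γ with hγ | hγ
  · -- γ ≥ 0
    refine ⟨max 1 (2/(p-1)), le_max_left _ _, fun s t hs hts => ?_⟩
    obtain ⟨h1, ht1, _⟩ := caseC_core hp (le_max_left _ _) (le_max_right _ _) hs hts
    have ht0 : (0:ℝ) < t := by linarith
    have h2 : t ^ ((p-1)/2) ≤ t ^ (p-1) :=
      Real.rpow_le_rpow_of_exponent_le ht1 (by linarith)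
    have h3 : (1:ℝ) ≤ lg t ^ γ := Real.one_le_rpow (lg_one_le ht0.le) hγ
    nlinarith [Real.rpow_nonneg ht0.le (p-1)]
  · -- γ < 0
    set g : ℝ := -γ with hg
    have hg0 : 0 < g := by rw [hg]; linarith
    set δ : ℝ := (p-1)/(4*g) with hδ
    have hδ0 : 0 < δ := by rw [hδ]; positivity
    set K0 : ℝ := ((2*Real.exp 1)^δ/δ)^g with hK0
    have hK00 : 0 < K0 := by
      apply Real.rpow_pos_of_pos
      apply div_pos (Real.rpow_pos_of_pos (by positivity) _) hδ0
    set t₃ : ℝ := max 1 (K0 ^ (4/(p-1))) with ht₃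
    have ht₃1 : (1:ℝ) ≤ t₃ := le_max_left _ _
    refine ⟨max (max 1 (2/(p-1))) (Real.log t₃), le_trans (le_max_left _ _) (le_max_left _ _),
      fun s t hs hts => ?_⟩
    set q := max (max 1 (2/(p-1))) (Real.log t₃) with hqdef
    have hq1 : 1 ≤ q := le_trans (le_max_left _ _) (le_max_left _ _)
    have hq2 : 2/(p-1) ≤ q := le_trans (le_max_right _ _) (le_max_left _ _)
    obtain ⟨h1, ht1, hexpq⟩ := caseC_core hp hq1 hq2 hs hts
    have ht0 : (0:ℝ) < t := by linarith
    -- t ≥ t₃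
    have htt₃ : t₃ ≤ t := by
      calc t₃ = Real.exp (Real.log t₃) := (Real.exp_log (by linarith)).symm
        _ ≤ Real.exp q := Real.exp_le_exp.mpr (le_max_right _ _)
        _ ≤ t := hexpq
    -- lg t ^ g ≤ K0 * t^((p-1)/4)
    have hlgt : lg t ≤ (2*Real.exp 1*t) ^ δ / δ := by
      have h2 : lg t ≤ (Real.exp 1 + t) ^ δ / δ := Real.log_le_rpow_div (by positivity) hδ0
      have h3 : (Real.exp 1 + t) ^ δ ≤ (2*Real.exp 1*t) ^ δ :=
        Real.rpow_le_rpow (by positivity) (by nlinarith) hδ0.le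
      calc lg t ≤ (Real.exp 1 + t) ^ δ / δ := h2
        _ ≤ (2*Real.exp 1*t) ^ δ / δ := by gcongr
    have hKt : lg t ^ g ≤ t ^ ((p-1)/2) := by
      have h4 : lg t ^ g ≤ ((2*Real.exp 1*t) ^ δ / δ) ^ g :=
        Real.rpow_le_rpow (le_of_lt (lg_pos ht0.le)) hlgt hg0.le
      have h5 : ((2*Real.exp 1*t) ^ δ / δ) ^ g = K0 * t ^ (δ*g) := by
        rw [Real.mul_rpow (by positivity) ht0.le, mul_div_right_comm,
          Real.mul_rpow (by positivity) (Real.rpow_nonneg ht0.le δ),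
          ← Real.rpow_mul ht0.le]
      have hgne : g ≠ 0 := hg0.ne'
      have hδg : δ * g = (p-1)/4 := by rw [hδ]; field_simp
      have hK0t : K0 ≤ t ^ ((p-1)/4) := by
        have h6 : K0 ^ (4/(p-1)) ≤ t := le_trans (le_max_right _ _) htt₃
        have h7 := Real.rpow_le_rpow (Real.rpow_nonneg hK00.le _) h6
          (by positivity : (0:ℝ) ≤ (p-1)/4)
        rwa [← Real.rpow_mul hK00.le, div_mul_div_comm, mul_comm (4:ℝ),
          div_self (by positivity), Real.rpow_one] at h7
      have h8 : t ^ ((p-1)/4) * t ^ ((p-1)/4) = t ^ ((p-1)/2) := by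
        rw [← Real.rpow_add ht0]; ring_nf
      calc lg t ^ g ≤ K0 * t ^ (δ*g) := h5 ▸ h4
        _ = K0 * t ^ ((p-1)/4) := by rw [hδg]
        _ ≤ t ^ ((p-1)/4) * t ^ ((p-1)/4) :=
            mul_le_mul_of_nonneg_right hK0t (Real.rpow_nonneg ht0.le _)
        _ = t ^ ((p-1)/2) := h8
    have hlgpos : 0 < lg t ^ g := Real.rpow_pos_of_pos (lg_pos ht0.le) _
    have hγg : lg t ^ γ = (lg t ^ g)⁻¹ := by
      have : lg t ^ g = (lg t ^ γ)⁻¹ := by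
        rw [hg, Real.rpow_neg (lg_pos ht0.le).le]
      rw [this, inv_inv]
    have hfin : t ^ ((p-1)/2) ≤ t ^ (p-1) * lg t ^ γ := by
      rw [hγg]
      have hdiv : t ^ (p-1) * (lg t ^ g)⁻¹ = t ^ (p-1) / lg t ^ g := by
        rw [div_eq_mul_inv]
      rw [hdiv, le_div_iff₀ hlgpos]
      calc t ^ ((p-1)/2) * lg t ^ g ≤ t ^ ((p-1)/2) * t ^ ((p-1)/2) :=
            mul_le_mul_of_nonneg_left hKt (Real.rpow_nonneg ht0.le _)
        _ = t ^ (p-1) := by rw [← Real.rpow_add ht0]; ring_nf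
    exact le_trans h1 hfin


lemma kappa_exists (p γ cl Cu : ℝ) (hp : 1 < p) (hcl0 : 0 < cl) (hcl1 : cl ≤ 1)
    (hCu1 : 1 ≤ Cu) :
    ∃ κ : ℝ, 0 < κ ∧ κ ≤ 1 ∧
      κ ^ (p-1) * ((Cu/cl) * (1 + Real.log κ⁻¹)) ^ |γ| ≤ 1/2 := by
  have hp1 : (0:ℝ) < p - 1 := by linarith
  have hq0 : (0:ℝ) < 2*Cu/cl := by positivity
  set ε₀ : ℝ := (1/2) / (2*Cu/cl) ^ |γ| with hε₀
  have hε₀0 : 0 < ε₀ := by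
    apply div_pos (by norm_num) (Real.rpow_pos_of_pos hq0 _)
  have htend := tendsto_rpow_mul_exp_neg_mul_atTop_nhds_zero |γ| (p-1) hp1
  have hev : ∀ᶠ x : ℝ in atTop, x ^ |γ| * Real.exp (-(p-1)*x) < ε₀ :=
    htend.eventually (gt_mem_nhds hε₀0)
  obtain ⟨x, hx, hx1⟩ := (hev.and (eventually_ge_atTop 1)).exists
  refine ⟨Real.exp (-x), Real.exp_pos _, Real.exp_le_one_iff.mpr (by linarith), ?_⟩
  have hloginv : Real.log (Real.exp (-x))⁻¹ = x := by
    rw [← Real.exp_neg, neg_neg, Real.log_exp]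
  rw [hloginv]
  have h1 : (Real.exp (-x)) ^ (p-1) = Real.exp (-(p-1)*x) := by
    rw [← Real.exp_mul]; ring_nf
  have h2 : (Cu/cl) * (1 + x) ≤ (2*Cu/cl) * x := by
    have : (1:ℝ) + x ≤ 2*x := by linarith
    have hCc : 0 < Cu/cl := by positivity
    calc (Cu/cl) * (1+x) ≤ (Cu/cl) * (2*x) := by nlinarith
      _ = (2*Cu/cl) * x := by ring
  have h3 : ((Cu/cl) * (1 + x)) ^ |γ| ≤ (2*Cu/cl) ^ |γ| * x ^ |γ| := by
    calc ((Cu/cl) * (1 + x)) ^ |γ| ≤ ((2*Cu/cl) * x) ^ |γ| :=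
          Real.rpow_le_rpow (by positivity) h2 (abs_nonneg _)
      _ = (2*Cu/cl) ^ |γ| * x ^ |γ| := Real.mul_rpow hq0.le (by linarith)
  calc Real.exp (-x) ^ (p-1) * ((Cu/cl) * (1 + x)) ^ |γ|
      ≤ Real.exp (-(p-1)*x) * ((2*Cu/cl) ^ |γ| * x ^ |γ|) := by
        rw [h1]
        exact mul_le_mul_of_nonneg_left h3 (Real.exp_pos _).le
    _ = (2*Cu/cl) ^ |γ| * (x ^ |γ| * Real.exp (-(p-1)*x)) := by ring
    _ ≤ (2*Cu/cl) ^ |γ| * ε₀ := by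
        apply mul_le_mul_of_nonneg_left hx.le (Real.rpow_nonneg hq0.le _)
    _ = 1/2 := by
        rw [hε₀, mul_div_assoc']
        rw [mul_comm, mul_div_assoc, div_self (Real.rpow_pos_of_pos hq0 _).ne', mul_one]




set_option maxHeartbeats 2000000 in
/-- Conjugate of t^p log^γ(e+t) is comparable to s^{p'} log^{γ/(1-p)}(e+s). -/
theorem stmt_8 (p γ : ℝ) (hp : 1 < p) (φs : ℝ → ℝ)
    (hconj : ∀ s : ℝ, 0 ≤ s →
      IsLUB {y : ℝ | ∃ t : ℝ, 0 ≤ t ∧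
        y = s * t - t ^ p * (Real.log (Real.exp 1 + t)) ^ γ} (φs s)) :
    ∃ c₁ c₂ : ℝ, 0 < c₁ ∧ 0 < c₂ ∧ ∀ s : ℝ, 0 ≤ s →
      c₁ * s ^ (p / (p - 1)) * (Real.log (Real.exp 1 + s)) ^ (γ / (1 - p)) ≤ φs s ∧
      φs s ≤ c₂ * s ^ (p / (p - 1)) * (Real.log (Real.exp 1 + s)) ^ (γ / (1 - p)) := by
  have hp1 : (0:ℝ) < p - 1 := by linarith
  have hp0 : (0:ℝ) < p := by linarith
  set a : ℝ := 1/(p-1) with hadef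
  have ha : 0 < a := by positivity
  set b : ℝ := γ/(1-p) with hbdef
  have h1a : 1 + a = p/(p-1) := by rw [hadef]; field_simp; ring
  have h1p : (1:ℝ) - p ≠ 0 := by linarith
  have hap : a * p = 1 + a := by rw [hadef]; field_simp; ring
  have hbp : b * p + γ = b := by rw [hbdef]; field_simp; ring
  have hbp1 : b * (p-1) = -γ := by rw [hbdef]; field_simp; ring
  have hap1 : a * (p-1) = 1 := by rw [hadef]; field_simp
  obtain ⟨cl, hcl0, hcl1, hcl⟩ := comp_lower a b ha
  obtain ⟨Cu, hCu1, hCu⟩ := comp_upper a b ha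
  obtain ⟨q, hq1, hqC⟩ := caseC p γ hp
  set D : ℝ := max (1/cl) (q+1) with hDdef
  have hD1 : 1 ≤ D := le_trans (by linarith) (le_max_right _ _)
  have hD0 : (0:ℝ) < D := by linarith
  set M : ℝ := D ^ (|γ|/(p-1)) with hMdef
  have hM1 : 1 ≤ M := Real.one_le_rpow hD1 (by positivity)
  have hM0 : (0:ℝ) < M := by linarith
  have hMp : M ^ (p-1) = D ^ |γ| := by
    rw [hMdef, ← Real.rpow_mul hD0.le, div_mul_cancel₀ _ hp1.ne']
  obtain ⟨κ, hκ0, hκ1, hκcond⟩ := kappa_exists p γ cl Cu hp hcl0 hcl1 hCu1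
  refine ⟨κ/2, M, by positivity, by positivity, fun s hs => ?_⟩
  rcases eq_or_lt_of_le hs with hs0 | hs0
  · -- s = 0
    rw [← hs0]
    rw [Real.zero_rpow (ne_of_gt (div_pos hp0 hp1))]
    obtain ⟨hub0, hlub0⟩ := hconj 0 le_rfl
    have hmem0 : (0:ℝ) ∈ {y : ℝ | ∃ t : ℝ, 0 ≤ t ∧
        y = 0 * t - t ^ p * (Real.log (Real.exp 1 + t)) ^ γ} :=
      ⟨0, le_rfl, by rw [Real.zero_rpow hp0.ne']; ring⟩
    have hge : (0:ℝ) ≤ φs 0 := hub0 hmem0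
    have hle : φs 0 ≤ 0 := by
      apply hlub0
      rintro y ⟨t, ht, rfl⟩
      have h1 : (0:ℝ) ≤ t ^ p := Real.rpow_nonneg ht p
      have h2 : (0:ℝ) ≤ Real.log (Real.exp 1 + t) ^ γ :=
        Real.rpow_nonneg (le_of_lt (lg_pos ht)) γ
      nlinarith
    constructor
    · simp only [mul_zero, zero_mul]; linarith
    · simp only [mul_zero, zero_mul]; linarith
  · -- s > 0
    have hes : (0:ℝ) < Real.exp 1 + s := by positivity
    have hlgs : 1 ≤ lg s := lg_one_le hs
    have hlgs0 : 0 < lg s := lg_pos hs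
    have hsa : (0:ℝ) < s ^ a := Real.rpow_pos_of_pos hs0 _
    have hsb : (0:ℝ) < lg s ^ b := Real.rpow_pos_of_pos hlgs0 _
    set T₁ : ℝ := s ^ a * lg s ^ b with hT₁def
    have hT₁0 : 0 < T₁ := mul_pos hsa hsb
    set A : ℝ := s ^ (p/(p-1)) * lg s ^ b with hAdef
    have hsiaA : s ^ (1+a) * lg s ^ b = A := by rw [hAdef, h1a]
    have hA0 : 0 < A := mul_pos (Real.rpow_pos_of_pos hs0 _) hsb
    have hss : s * s ^ a = s ^ (1+a) := by
      rw [Real.rpow_add hs0, Real.rpow_one]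
    obtain ⟨hlub_ub, hlub_least⟩ := hconj s hs
    constructor
    · -- LOWER BOUND
      set t : ℝ := κ * T₁ with htdef
      have ht0 : 0 < t := mul_pos hκ0 hT₁0
      have hmem : s * t - t ^ p * lg t ^ γ ≤ φs s := by
        apply hlub_ub
        exact ⟨t, ht0.le, rfl⟩
      -- ratio bounds
      set D' : ℝ := (Cu/cl) * (1 + Real.log κ⁻¹) with hD'def
      have hlogκ : 0 ≤ Real.log κ⁻¹ := Real.log_nonneg ((one_le_inv₀ hκ0).2 hκ1)
      have hD'1 : 1 ≤ D' := by
        rw [hD'def]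
        have h1 : 1 ≤ Cu/cl := by
          rw [le_div_iff₀ hcl0]; linarith
        nlinarith
      have hup : lg t ≤ D' * lg s := by
        have h1 : lg t ≤ lg T₁ := lg_mono ht0.le (by nlinarith [hT₁0, hκ1, hκ0])
        have h2 : lg T₁ ≤ Cu * lg s := hCu s hs
        have h3 : Cu ≤ D' := by
          rw [hD'def]
          have : Cu ≤ Cu/cl := by
            rw [le_div_iff₀ hcl0]; nlinarith
          nlinarith [div_pos (by linarith : (0:ℝ) < Cu) hcl0]
        nlinarith
      have hdn : lg s ≤ D' * lg t := by
        have h1 : cl * lg s ≤ lg T₁ := hcl s hs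
        have h2 : lg T₁ ≤ (1 + Real.log κ⁻¹) * lg t := by
          rw [htdef]; exact lg_scale_lower hκ0 hκ1 hT₁0.le
        have hlgt1 : 1 ≤ lg t := lg_one_le ht0.le
        rw [hD'def]
        rw [div_mul_eq_mul_div, div_mul_eq_mul_div, le_div_iff₀ hcl0]
        calc lg s * cl ≤ lg T₁ := by linarith [h1]
          _ ≤ (1 + Real.log κ⁻¹) * lg t := h2
          _ ≤ Cu * (1 + Real.log κ⁻¹) * lg t := by
              nlinarith [mul_nonneg (mul_nonneg (by linarith : (0:ℝ) ≤ Cu - 1)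
                (by linarith : (0:ℝ) ≤ 1 + Real.log κ⁻¹)) (by linarith : (0:ℝ) ≤ lg t)]
      have hratio : lg t ^ γ ≤ D' ^ |γ| * lg s ^ γ :=
        ratio_rpow (lg_one_le ht0.le) hlgs hD'1 hup hdn γ
      -- algebra
      have hst : s * t = κ * A := by
        rw [htdef, hT₁def, ← hsiaA, ← hss]; ring
      have htp : t ^ p = κ ^ p * (s ^ (1+a) * lg s ^ (b*p)) := by
        rw [htdef, hT₁def, Real.mul_rpow (by positivity) (by positivity),
          Real.mul_rpow (by positivity) (by positivity),
          ← Real.rpow_mul hs0.le, ← Real.rpow_mul hlgs0.le, hap]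
      have hφt : t ^ p * lg t ^ γ ≤ (κ/2) * A := by
        have h4 : t ^ p * lg t ^ γ ≤ κ ^ p * (s ^ (1+a) * lg s ^ (b*p)) * (D' ^ |γ| * lg s ^ γ) := by
          rw [htp]
          apply mul_le_mul_of_nonneg_left hratio
          positivity
        have h5 : κ ^ p * (s ^ (1+a) * lg s ^ (b*p)) * (D' ^ |γ| * lg s ^ γ)
            = (κ ^ (p-1) * D' ^ |γ|) * κ * (s ^ (1+a) * (lg s ^ (b*p) * lg s ^ γ)) := by
          have hκp : κ ^ p = κ ^ (p-1) * κ := by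
            have h := Real.rpow_add hκ0 (p-1) 1
            rw [Real.rpow_one] at h
            have hpp : p - 1 + 1 = p := by ring
            rw [hpp] at h
            exact h
          rw [hκp]; ring
        have h6 : lg s ^ (b*p) * lg s ^ γ = lg s ^ b := by
          rw [← Real.rpow_add hlgs0, hbp]
        have h7 : κ ^ (p-1) * D' ^ |γ| ≤ 1/2 := by
          rw [hD'def]; exact hκcond
        calc t ^ p * lg t ^ γ ≤ (κ ^ (p-1) * D' ^ |γ|) * κ * (s ^ (1+a) * (lg s ^ (b*p) * lg s ^ γ)) := by
              rw [← h5]; exact h4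
          _ = (κ ^ (p-1) * D' ^ |γ|) * κ * A := by rw [h6, hsiaA]
          _ ≤ (1/2) * κ * A := by
              apply mul_le_mul_of_nonneg_right _ hA0.le
              apply mul_le_mul_of_nonneg_right h7 hκ0.le
          _ = (κ/2) * A := by ring
      have : (κ/2) * A ≤ s * t - t ^ p * lg t ^ γ := by
        rw [hst]; linarith
      calc κ/2 * s ^ (p/(p-1)) * lg s ^ (γ/(1-p)) = (κ/2) * A := by
            rw [hAdef, hbdef]; ring
        _ ≤ s * t - t ^ p * lg t ^ γ := this
        _ ≤ φs s := hmem
    · -- UPPER BOUND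
      have hub : ∀ y ∈ {y : ℝ | ∃ t : ℝ, 0 ≤ t ∧
          y = s * t - t ^ p * lg t ^ γ}, y ≤ M * A := by
        rintro y ⟨t, ht0, rfl⟩
        have hkey : ∀ t' : ℝ, 0 < t' → s ≤ t' ^ (p-1) * lg t' ^ γ →
            s * t' - t' ^ p * lg t' ^ γ ≤ M * A := by
          intro t' ht'0 hle
          have h1 : s * t' ≤ t' ^ p * lg t' ^ γ := by
            have h2 : s * t' ≤ (t' ^ (p-1) * lg t' ^ γ) * t' :=
              mul_le_mul_of_nonneg_right hle ht'0.le
            have h3 : (t' ^ (p-1) * lg t' ^ γ) * t' = t' ^ p * lg t' ^ γ := by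
              have h := Real.rpow_add ht'0 (p-1) 1
              rw [Real.rpow_one] at h
              have hpp : p - 1 + 1 = p := by ring
              rw [hpp] at h
              rw [mul_right_comm, ← h]
            linarith
          nlinarith [mul_pos hM0 hA0]
        rcases le_total t (M * T₁) with hcase | hcase
        · -- small t
          have hφ0 : 0 ≤ t ^ p * lg t ^ γ := by
            have := Real.rpow_nonneg ht0 p
            have := Real.rpow_nonneg (le_of_lt (lg_pos ht0)) γ
            positivity
          have h1 : s * t ≤ M * A := by
            calc s * t ≤ s * (M * T₁) := mul_le_mul_of_nonneg_left hcase hs0.le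
              _ = M * (s ^ (1+a) * lg s ^ b) := by rw [hT₁def, ← hss]; ring
              _ = M * A := by rw [hsiaA]
          linarith
        · rcases le_total t ((Real.exp 1 + s) ^ q) with hcase2 | hcase2
          · -- middle t
            have ht0' : 0 < t := lt_of_lt_of_le (by positivity : (0:ℝ) < M * T₁) hcase
            apply hkey t ht0'
            -- s ≤ t^(p-1) lg t^γ
            have hstep1 : M ^ (p-1) * (s * lg s ^ (-γ)) ≤ t ^ (p-1) := by
              have h1 : (M * T₁) ^ (p-1) ≤ t ^ (p-1) :=
                Real.rpow_le_rpow (by positivity) hcase hp1.le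
              have h2 : (M * T₁) ^ (p-1) = M ^ (p-1) * (s * lg s ^ (-γ)) := by
                rw [hT₁def, Real.mul_rpow hM0.le (by positivity),
                  Real.mul_rpow hsa.le hsb.le,
                  ← Real.rpow_mul hs0.le, ← Real.rpow_mul hlgs0.le, hap1, hbp1,
                  Real.rpow_one]
              linarith [h2 ▸ h1]
            have hratio2 : lg s ^ γ ≤ D ^ |γ| * lg t ^ γ := by
              apply ratio_rpow hlgs (lg_one_le ht0) hD1 _ _ γ
              · -- lg s ≤ D * lg t
                have h1 : cl * lg s ≤ lg T₁ := hcl s hs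
                have h2 : lg T₁ ≤ lg t := by
                  apply lg_mono hT₁0.le
                  nlinarith
                have h3 : lg s ≤ (1/cl) * lg t := by
                  rw [div_mul_eq_mul_div, le_div_iff₀ hcl0]; nlinarith
                have h4 : (1/cl) * lg t ≤ D * lg t := by
                  apply mul_le_mul_of_nonneg_right (le_max_left _ _)
                  linarith [lg_one_le ht0]
                linarith
              · -- lg t ≤ D * lg s
                have h1 : lg t ≤ (Real.log (2*1) + q) * lg s :=
                  lg_poly_upper le_rfl hq1 ht0 hs (by rw [one_mul]; exact hcase2)
                have hlog2 : Real.log (2*1) ≤ 1 := by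
                  norm_num
                  calc Real.log 2 ≤ 2 - 1 := Real.log_le_sub_one_of_pos (by norm_num)
                    _ = 1 := by norm_num
                have h2 : (Real.log (2*1) + q) * lg s ≤ (q+1) * lg s := by
                  apply mul_le_mul_of_nonneg_right _ (by linarith)
                  norm_num at hlog2 ⊢; linarith
                have h3 : (q+1) * lg s ≤ D * lg s :=
                  mul_le_mul_of_nonneg_right (le_max_right _ _) (by linarith)
                linarith
            -- combine
            have hlgt : 0 < lg t ^ γ := Real.rpow_pos_of_pos (lg_pos ht0) _
            have hlgsneg : 0 < lg s ^ (-γ) := Real.rpow_pos_of_pos hlgs0 _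
            have hcomb : s ≤ t ^ (p-1) * lg t ^ γ := by
              have h5 : (M ^ (p-1) * (s * lg s ^ (-γ))) * lg t ^ γ ≤ t ^ (p-1) * lg t ^ γ :=
                mul_le_mul_of_nonneg_right hstep1 hlgt.le
              have h6 : (M ^ (p-1) * (s * lg s ^ (-γ))) * lg t ^ γ
                  = (s * lg s ^ (-γ)) * (D ^ |γ| * lg t ^ γ) := by
                rw [hMp]; ring
              have h7 : (s * lg s ^ (-γ)) * lg s ^ γ ≤ (s * lg s ^ (-γ)) * (D ^ |γ| * lg t ^ γ) :=
                mul_le_mul_of_nonneg_left hratio2 (by positivity)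
              have h8 : (s * lg s ^ (-γ)) * lg s ^ γ = s := by
                rw [mul_assoc, ← Real.rpow_add hlgs0]
                norm_num
              calc s = (s * lg s ^ (-γ)) * lg s ^ γ := h8.symm
                _ ≤ (s * lg s ^ (-γ)) * (D ^ |γ| * lg t ^ γ) := h7
                _ = (M ^ (p-1) * (s * lg s ^ (-γ))) * lg t ^ γ := h6.symm
                _ ≤ t ^ (p-1) * lg t ^ γ := h5
            exact hcomb
          · -- large t
            have ht0' : 0 < t := by
              have : (0:ℝ) < (Real.exp 1 + s) ^ q := Real.rpow_pos_of_pos hes _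
              linarith
            exact hkey t ht0' (hqC s t hs hcase2)
      have := hlub_least hub
      calc φs s ≤ M * A := this
        _ = M * s ^ (p/(p-1)) * lg s ^ (γ/(1-p)) := by rw [hAdef, hbdef]; ring
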